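/- Let (X, d) be a metric space and μ a Borel measure on X with 0 < μ(B_r(x)) < ∞ for all x ∈ X and r > 0, satisfying the uniform local doubling property with constant C_LD ≥ 1 and exponent D ≥ 0. Let ε > 0, Λ ≥ 0, C₀ > 0, and let p : (0, 1] × X × X → [0, ∞) satisfy p(t, x, y) ≤ C₀ · μ(B_{√t}(x))^{−1/2} · μ(B_{√t}(y))^{−1/2} · exp(−d(x, y)²/((4 + ε/2)t) − Λt) for all t ∈ (0, 1] and x, y ∈ X. Then there exists a constant C > 0, depending only on D, C_LD, C₀ and ε, such that for all t ∈ (0, 1] and x, y ∈ X, p(t, x, y) ≤ C · μ(B₁(x))^{−1} · t^{−D/2} · exp(−d(x, y)²/((4 + ε)t) − Λt). -/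
import Mathlib


open MeasureTheory Metric ENNReal

universe u

private lemma aux_inv_sqrt_le {A V K : ℝ} (hA : 0 < A) (hV : 0 < V) (hK : 0 < K)
    (h : V ≤ K * A) : A ^ (-(1 : ℝ) / 2) ≤ Real.sqrt K / Real.sqrt V := by
  have h1 : V / K ≤ A := (div_le_iff₀ hK).mpr (by linarith [h, mul_comm K A])
  have h2 : A ^ (-(1 : ℝ) / 2) = (Real.sqrt A)⁻¹ := by
    rw [Real.sqrt_eq_rpow, ← Real.rpow_neg hA.le]
    norm_num
  have h3 : Real.sqrt (V / K) ≤ Real.sqrt A := Real.sqrt_le_sqrt h1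
  have h4 : 0 < Real.sqrt (V / K) := Real.sqrt_pos.mpr (div_pos hV hK)
  rw [h2]
  calc (Real.sqrt A)⁻¹ ≤ (Real.sqrt (V / K))⁻¹ := by
        exact inv_anti₀ h4 h3
    _ = Real.sqrt K / Real.sqrt V := by
        rw [Real.sqrt_div hV.le, inv_div]

private lemma aux_toReal_le {α : Type*} [MeasurableSpace α] {μ : Measure α}
    {S T : Set α} {k : ℝ} (hk : 0 ≤ k) (hT : μ T < ⊤)
    (h : μ S ≤ ENNReal.ofReal k * μ T) : (μ S).toReal ≤ k * (μ T).toReal := by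
  have hne : ENNReal.ofReal k * μ T ≠ ⊤ := ENNReal.mul_ne_top ENNReal.ofReal_ne_top hT.ne
  calc (μ S).toReal ≤ (ENNReal.ofReal k * μ T).toReal := ENNReal.toReal_mono hne h
    _ = k * (μ T).toReal := by rw [ENNReal.toReal_mul, ENNReal.toReal_ofReal hk]

set_option maxHeartbeats 1000000

/-- **Decoupled heat kernel upper bound from a Gaussian bound and local doubling.**
There is a constant `C > 0` depending only on the doubling data `D, C_LD`, the Gaussian
constant `C₀` and `ε > 0` such that: on any metric measure space whose balls have positive
finite measure and which is uniformly locally doubling with constant `C_LD` and exponent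
`D`, any kernel `p` satisfying Sturm's Gaussian upper bound
`p(t,x,y) ≤ C₀ μ(B_{√t}(x))^{-1/2} μ(B_{√t}(y))^{-1/2} exp(-d(x,y)²/((4+ε/2)t) - Λt)`
for `t ∈ (0,1]` also satisfies
`p(t,x,y) ≤ C μ(B₁(x))^{-1} t^{-D/2} exp(-d(x,y)²/((4+ε)t) - Λt)` for `t ∈ (0,1]`. -/
theorem heat_kernel_decoupled_upper_bound
    (D C_LD C₀ ε : ℝ) (hD : 0 ≤ D) (hCLD : 1 ≤ C_LD) (hC₀ : 0 < C₀) (hε : 0 < ε) :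
    ∃ C : ℝ, 0 < C ∧
      ∀ (X : Type u) [MetricSpace X] [MeasurableSpace X] [BorelSpace X]
        (μ : Measure X),
        (∀ (x : X) (r : ℝ), 0 < r → 0 < μ (ball x r) ∧ μ (ball x r) < ⊤) →
        (∀ (x : X) (s s' : ℝ), 0 < s' → s' ≤ s →
          μ (ball x s) ≤
            ENNReal.ofReal (C_LD * (s / s') ^ D * Real.exp (C_LD * s)) * μ (ball x s')) →
        ∀ (Λ : ℝ), 0 ≤ Λ →
        ∀ (p : ℝ → X → X → ℝ),
          (∀ (t : ℝ) (x y : X), 0 < t → t ≤ 1 → 0 ≤ p t x y) →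
          (∀ (t : ℝ) (x y : X), 0 < t → t ≤ 1 →
            p t x y ≤ C₀ * (μ (ball x (Real.sqrt t))).toReal ^ (-(1 : ℝ) / 2) *
              (μ (ball y (Real.sqrt t))).toReal ^ (-(1 : ℝ) / 2) *
              Real.exp (-(dist x y) ^ 2 / ((4 + ε / 2) * t) - Λ * t)) →
          ∀ (t : ℝ) (x y : X), 0 < t → t ≤ 1 →
            p t x y ≤ C * (μ (ball x 1)).toReal⁻¹ * t ^ (-D / 2) *
              Real.exp (-(dist x y) ^ 2 / ((4 + ε) * t) - Λ * t) := by
  have hCLD0 : (0 : ℝ) < C_LD := lt_of_lt_of_le one_pos hCLD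
  set c : ℝ := ε / 2 / ((4 + ε / 2) * (4 + ε)) with hc_def
  have hc : 0 < c := by
    apply div_pos (by linarith)
    positivity
  set a : ℝ := (D + C_LD) / 2 with ha_def
  have ha : 0 ≤ a := by positivity
  clear_value c a
  refine ⟨C₀ * C_LD * Real.exp (C_LD + a ^ 2 / (4 * c)), by positivity, ?_⟩
  intro X _ _ _ μ hball hdoub Λ hΛ p hp0 hp t x y ht ht1
  set s := Real.sqrt t with hs_def
  have hs : 0 < s := Real.sqrt_pos.mpr ht
  have hs1 : s ≤ 1 := by
    rw [hs_def, show (1 : ℝ) = Real.sqrt 1 by simp]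
    exact Real.sqrt_le_sqrt ht1
  have hss : s * s = t := Real.mul_self_sqrt ht.le
  set d := dist x y with hd_def
  have hd : 0 ≤ d := dist_nonneg
  obtain ⟨hA0, hAt⟩ := hball x s hs
  obtain ⟨hB0, hBt⟩ := hball y s hs
  obtain ⟨hV0, hVt⟩ := hball x 1 one_pos
  set A := (μ (ball x s)).toReal with hA_def
  set B := (μ (ball y s)).toReal with hB_def
  set V := (μ (ball x 1)).toReal with hV_def
  have hA : 0 < A := ENNReal.toReal_pos hA0.ne' hAt.ne
  have hB : 0 < B := ENNReal.toReal_pos hB0.ne' hBt.ne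
  have hV : 0 < V := ENNReal.toReal_pos hV0.ne' hVt.ne
  set K₁ : ℝ := C_LD * (1 / s) ^ D * Real.exp (C_LD * 1) with hK1_def
  set K₂ : ℝ := C_LD * ((1 + d) / s) ^ D * Real.exp (C_LD * (1 + d)) with hK2_def
  have hK₁pos : 0 < K₁ := by
    have : (0 : ℝ) < (1 / s) ^ D := Real.rpow_pos_of_pos (by positivity) D
    positivity
  have hK₂pos : 0 < K₂ := by
    have : (0 : ℝ) < ((1 + d) / s) ^ D := Real.rpow_pos_of_pos (by positivity) D
    positivity
  have hK1 : V ≤ K₁ * A :=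
    aux_toReal_le hK₁pos.le hAt (hdoub x 1 s hs hs1)
  have hK2 : V ≤ K₂ * B := by
    have hsub : ball x 1 ⊆ ball y (1 + d) := by
      intro z hz
      rw [mem_ball] at hz ⊢
      calc dist z y ≤ dist z x + dist x y := dist_triangle z x y
        _ < 1 + d := by
          rw [← hd_def]; linarith [hz]
    have h1 : μ (ball x 1) ≤ μ (ball y (1 + d)) := measure_mono hsub
    have h2 := hdoub y (1 + d) s hs (hs1.trans (by linarith))
    exact aux_toReal_le hK₂pos.le hBt (h1.trans h2)
  -- first bound on p
  set E : ℝ := Real.exp (-d ^ 2 / ((4 + ε / 2) * t) - Λ * t) with hE_def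
  have hE : 0 < E := Real.exp_pos _
  have hstep : p t x y ≤ C₀ * (Real.sqrt K₁ / Real.sqrt V) *
      (Real.sqrt K₂ / Real.sqrt V) * E := by
    refine (hp t x y ht ht1).trans ?_
    have h1 : A ^ (-(1 : ℝ) / 2) ≤ Real.sqrt K₁ / Real.sqrt V :=
      aux_inv_sqrt_le hA hV hK₁pos hK1
    have h2 : B ^ (-(1 : ℝ) / 2) ≤ Real.sqrt K₂ / Real.sqrt V :=
      aux_inv_sqrt_le hB hV hK₂pos hK2
    have hA' : (0 : ℝ) ≤ A ^ (-(1 : ℝ) / 2) := Real.rpow_nonneg hA.le _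
    have hB' : (0 : ℝ) ≤ B ^ (-(1 : ℝ) / 2) := Real.rpow_nonneg hB.le _
    have hq1 : (0 : ℝ) ≤ Real.sqrt K₁ / Real.sqrt V := by positivity
    have hq2 : (0 : ℝ) ≤ Real.sqrt K₂ / Real.sqrt V := by positivity
    gcongr
  -- simplify the product of square roots
  have hprod : Real.sqrt K₁ / Real.sqrt V * (Real.sqrt K₂ / Real.sqrt V) =
      Real.sqrt (K₁ * K₂) / V := by
    rw [Real.sqrt_mul hK₁pos.le, div_mul_div_comm, Real.mul_self_sqrt hV.le]
  -- compute / bound the square root of K₁ * K₂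
  set R : ℝ := C_LD * (1 + d) ^ (D / 2) * t ^ (-D / 2) * Real.exp (C_LD * (2 + d) / 2)
    with hR_def
  have hRpos : 0 < R := by
    have r1 : (0 : ℝ) < (1 + d) ^ (D / 2) := Real.rpow_pos_of_pos (by linarith) _
    have r2 : (0 : ℝ) < t ^ (-D / 2) := Real.rpow_pos_of_pos ht _
    positivity
  have hKR : K₁ * K₂ = R ^ 2 := by
    have e1 : (1 / s) ^ D * ((1 + d) / s) ^ D = (1 + d) ^ D * t ^ (-D) := by
      rw [← Real.mul_rpow (by positivity) (by positivity)]
      have : 1 / s * ((1 + d) / s) = (1 + d) * t⁻¹ := by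
        rw [div_mul_div_comm, one_mul, hss, div_eq_mul_inv]
      rw [this, Real.mul_rpow (by linarith) (by positivity), Real.rpow_neg ht.le,
        Real.inv_rpow ht.le]
    have e2 : ((1 + d) ^ (D / 2)) ^ 2 = (1 + d) ^ D := by
      rw [← Real.rpow_natCast ((1 + d) ^ (D / 2)) 2, ← Real.rpow_mul (by linarith)]
      norm_num
    have e3 : (t ^ (-D / 2)) ^ 2 = t ^ (-D) := by
      rw [← Real.rpow_natCast (t ^ (-D / 2)) 2, ← Real.rpow_mul ht.le]
      norm_num
    have e4 : (Real.exp (C_LD * (2 + d) / 2)) ^ 2 = Real.exp (C_LD * 1) *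
        Real.exp (C_LD * (1 + d)) := by
      rw [← Real.exp_add, sq, ← Real.exp_add]
      ring_nf
    rw [hK1_def, hK2_def, hR_def]
    rw [mul_pow, mul_pow, mul_pow, e2, e3, e4]
    rw [show C_LD * (1 / s) ^ D * Real.exp (C_LD * 1) *
        (C_LD * ((1 + d) / s) ^ D * Real.exp (C_LD * (1 + d))) =
        C_LD ^ 2 * ((1 / s) ^ D * ((1 + d) / s) ^ D) *
        (Real.exp (C_LD * 1) * Real.exp (C_LD * (1 + d))) by ring, e1]
    ring
  have hsqrtKR : Real.sqrt (K₁ * K₂) = R := by rw [hKR, Real.sqrt_sq hRpos.le]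
  -- the key scalar inequality
  have hkey : (1 + d) ^ (D / 2) * Real.exp (C_LD * (2 + d) / 2) * E ≤
      Real.exp (C_LD + a ^ 2 / (4 * c)) *
        Real.exp (-d ^ 2 / ((4 + ε) * t) - Λ * t) := by
    have h1 : (1 + d) ^ (D / 2) ≤ Real.exp (d * (D / 2)) := by
      have hle : (1 + d) ≤ Real.exp d := by linarith [Real.add_one_le_exp d]
      calc (1 + d) ^ (D / 2) ≤ (Real.exp d) ^ (D / 2) :=
            Real.rpow_le_rpow (by linarith) hle (by positivity)
        _ = Real.exp (d * (D / 2)) := (Real.exp_mul d (D / 2)).symm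
    have h2 : (1 + d) ^ (D / 2) * Real.exp (C_LD * (2 + d) / 2) * E ≤
        Real.exp (d * (D / 2) + C_LD * (2 + d) / 2 +
          (-d ^ 2 / ((4 + ε / 2) * t) - Λ * t)) := by
      calc (1 + d) ^ (D / 2) * Real.exp (C_LD * (2 + d) / 2) * E ≤
            Real.exp (d * (D / 2)) * Real.exp (C_LD * (2 + d) / 2) * E :=
            mul_le_mul_of_nonneg_right
              (mul_le_mul_of_nonneg_right h1 (Real.exp_pos _).le) hE.le
        _ = Real.exp (d * (D / 2) + C_LD * (2 + d) / 2 +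
            (-d ^ 2 / ((4 + ε / 2) * t) - Λ * t)) := by
            rw [hE_def, ← Real.exp_add, ← Real.exp_add]
    refine h2.trans ?_
    rw [← Real.exp_add, Real.exp_le_exp]
    -- reduce to the quadratic inequality
    have hq : d ^ 2 / ((4 + ε / 2) * t) - d ^ 2 / ((4 + ε) * t) = c * (d ^ 2 / t) := by
      rw [hc_def]
      field_simp
      ring
    have hdt : d ^ 2 ≤ d ^ 2 / t := by
      rw [le_div_iff₀ ht]
      nlinarith [sq_nonneg d]
    have h4c : a * d - c * d ^ 2 ≤ a ^ 2 / (4 * c) := by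
      rw [le_div_iff₀ (by positivity)]
      nlinarith [sq_nonneg (2 * c * d - a)]
    have hcd : c * d ^ 2 ≤ c * (d ^ 2 / t) := by
      exact mul_le_mul_of_nonneg_left hdt hc.le
    have ha_d : d * (D / 2) + C_LD * d / 2 = a * d := by rw [ha_def]; ring
    rw [neg_div, neg_div]
    linarith [hq, hcd, h4c, ha_d]
  -- put everything together
  calc p t x y ≤ C₀ * (Real.sqrt K₁ / Real.sqrt V) * (Real.sqrt K₂ / Real.sqrt V) * E := hstep
    _ = C₀ * (R / V) * E := by rw [mul_assoc C₀, hprod, hsqrtKR]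
    _ = C₀ * C_LD * V⁻¹ * t ^ (-D / 2) *
        ((1 + d) ^ (D / 2) * Real.exp (C_LD * (2 + d) / 2) * E) := by
        rw [hR_def]; ring
    _ ≤ C₀ * C_LD * V⁻¹ * t ^ (-D / 2) *
        (Real.exp (C_LD + a ^ 2 / (4 * c)) *
          Real.exp (-d ^ 2 / ((4 + ε) * t) - Λ * t)) := by
        have ht' : (0 : ℝ) < t ^ (-D / 2) := Real.rpow_pos_of_pos ht _
        have : (0 : ℝ) ≤ C₀ * C_LD * V⁻¹ * t ^ (-D / 2) := by positivity
        exact mul_le_mul_of_nonneg_left hkey this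
    _ = C₀ * C_LD * Real.exp (C_LD + a ^ 2 / (4 * c)) * V⁻¹ * t ^ (-D / 2) *
        Real.exp (-d ^ 2 / ((4 + ε) * t) - Λ * t) := by ring
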